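/- For every integer l ≥ 6 and every C > 0 there exists K > 0 such that for every δ ∈ (0, 1] and every sequence a : ℤ → ℂ satisfying |a_k| ≤ C·⟨k⟩^{-l} and |a_k| ≤ δ·⟨k⟩^{-1} for all k (where ⟨k⟩ := max(1, |k|)), one has Σ_{k ∈ ℤ} ⟨k⟩⁷ |a_k|² ≤ K·δ^{1/2}. -/

import Mathlib

open Real

lemma aux_term (l : ℕ) (hl : 6 ≤ l) (C : ℝ) (hC : 0 < C) (δ : ℝ) (hδ : 0 < δ)
    (t b : ℝ) (ht : 1 ≤ t) (hb : 0 ≤ b) (h1 : b ≤ C / t ^ l) (h2 : b ≤ δ / t) :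
    t ^ 7 * b ^ 2 ≤ Real.sqrt (C ^ 3) * Real.sqrt δ * (1 / t ^ 2) := by
  have ht0 : (0:ℝ) < t := lt_of_lt_of_le one_pos ht
  have key : (t ^ 9 * b ^ 2) ^ 2 ≤ C ^ 3 * δ := by
    have hb4 : b ^ 4 ≤ (C / t ^ l) ^ 3 * (δ / t) := by
      have h3 : b ^ 3 ≤ (C / t ^ l) ^ 3 := pow_le_pow_left₀ hb h1 3
      calc b ^ 4 = b ^ 3 * b := by ring
        _ ≤ (C / t ^ l) ^ 3 * (δ / t) :=
          mul_le_mul h3 h2 hb (by positivity)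
    have ht18 : t ^ 18 ≤ t ^ (3 * l + 1) := pow_le_pow_right₀ ht (by omega)
    calc (t ^ 9 * b ^ 2) ^ 2 = t ^ 18 * b ^ 4 := by ring
      _ ≤ t ^ (3 * l + 1) * ((C / t ^ l) ^ 3 * (δ / t)) := by
          apply mul_le_mul ht18 hb4 (by positivity) (by positivity)
      _ = C ^ 3 * δ := by
          field_simp
          ring
  have hsq : t ^ 9 * b ^ 2 ≤ Real.sqrt (C ^ 3 * δ) := by
    have := Real.sqrt_le_sqrt key
    rwa [Real.sqrt_sq (by positivity)] at this
  rw [Real.sqrt_mul (by positivity)] at hsq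
  rw [mul_one_div, le_div_iff₀ (by positivity)]
  calc t ^ 7 * b ^ 2 * t ^ 2 = t ^ 9 * b ^ 2 := by ring
    _ ≤ _ := hsq

theorem stmt5 (l : ℕ) (hl : 6 ≤ l) (C : ℝ) (hC : 0 < C) :
    ∃ K : ℝ, 0 < K ∧
      ∀ δ : ℝ, 0 < δ → δ ≤ 1 →
        ∀ a : ℤ → ℂ,
          (∀ k : ℤ, ‖a k‖ ≤ C / (max 1 |(k : ℝ)|) ^ l) →
          (∀ k : ℤ, ‖a k‖ ≤ δ / max 1 |(k : ℝ)|) →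
          Summable (fun k : ℤ => (max 1 |(k : ℝ)|) ^ 7 * ‖a k‖ ^ 2) ∧
            ∑' k : ℤ, (max 1 |(k : ℝ)|) ^ 7 * ‖a k‖ ^ 2
              ≤ K * δ ^ ((1 : ℝ) / 2) := by
  -- the comparison function
  set f : ℤ → ℝ := fun k => 1 / (max 1 |(k : ℝ)|) ^ 2 with hf
  have hfnn : ∀ k, 0 ≤ f k := fun k => by positivity
  have hfsum : Summable f := by
    have hg : Summable (fun k : ℤ => 1 / (k : ℝ) ^ 2) := by
      rw [summable_one_div_int_pow]; norm_num
    have hh : Summable (fun k : ℤ => if k = 0 then (1:ℝ) else 0) :=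
      summable_of_ne_finset_zero (s := {0}) (fun k hk => by
        simp at hk; simp [hk])
    have : f = fun k : ℤ => (1 / (k : ℝ) ^ 2) + (if k = 0 then (1:ℝ) else 0) := by
      funext k
      by_cases hk : k = 0
      · simp [hf, hk]
      · have : (1:ℝ) ≤ |(k : ℝ)| := by
          rw [← Int.cast_abs]
          exact_mod_cast Int.one_le_abs hk
        simp [hf, hk, max_eq_right this, sq_abs]
    rw [this]
    exact hg.add hh
  have hS0 : 0 < ∑' k, f k := by
    have h1 : f 0 ≤ ∑' k, f k := Summable.le_tsum hfsum 0 (fun k _ => hfnn k)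
    have : f 0 = 1 := by simp [hf]
    linarith
  refine ⟨Real.sqrt (C ^ 3) * ∑' k, f k, by positivity, ?_⟩
  intro δ hδ hδ1 a ha1 ha2
  have hbound : ∀ k : ℤ, (max 1 |(k : ℝ)|) ^ 7 * ‖a k‖ ^ 2
      ≤ Real.sqrt (C ^ 3) * Real.sqrt δ * f k := by
    intro k
    exact aux_term l hl C hC δ hδ _ _ (le_max_left _ _) (norm_nonneg _)
      (ha1 k) (ha2 k)
  have hsum' : Summable (fun k : ℤ => Real.sqrt (C ^ 3) * Real.sqrt δ * f k) :=
    hfsum.mul_left _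
  have hsum : Summable (fun k : ℤ => (max 1 |(k : ℝ)|) ^ 7 * ‖a k‖ ^ 2) :=
    Summable.of_nonneg_of_le (fun k => by positivity) hbound hsum'
  refine ⟨hsum, ?_⟩
  have := Summable.tsum_le_tsum hbound hsum hsum'
  rw [tsum_mul_left] at this
  calc ∑' k : ℤ, (max 1 |(k : ℝ)|) ^ 7 * ‖a k‖ ^ 2
      ≤ Real.sqrt (C ^ 3) * Real.sqrt δ * ∑' k, f k := this
    _ = Real.sqrt (C ^ 3) * (∑' k, f k) * δ ^ ((1:ℝ)/2) := by
        rw [show δ ^ ((1:ℝ)/2) = Real.sqrt δ from (Real.sqrt_eq_rpow δ).symm, mul_right_comm]
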